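/- Let $C$ be a closed convex set in $\mathbb{R}^d$ and let $K$ be a totally disconnected Borel set such that $\operatorname{conv}(K) = C$ and $\pi_W(K) = \pi_W(C)$ for every one-dimensional linear subspace $W$ of $\mathbb{R}^d$. Then every exposed point of $C$ belongs to $K$, and the set of exposed points of $C$ is totally disconnected. -/

import Mathlib

open Set Module

/-- Orthogonal projection onto a subspace, viewed as a map of the ambient space. -/
noncomputable def orthProj {d : ℕ} (W : Submodule ℝ (EuclideanSpace ℝ (Fin d)))
    (x : EuclideanSpace ℝ (Fin d)) : EuclideanSpace ℝ (Fin d) :=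
  (W.orthogonalProjection x : EuclideanSpace ℝ (Fin d))

/-- If a closed convex set `C` is 1-dimensional fractal-decomposable with a totally
disconnected Borel set `K`, then every exposed point of `C` lies in `K`, and the set of
exposed points of `C` is totally disconnected. -/
theorem exposedPoints_subset_of_fractalDecomposable
    (d : ℕ) (hd : 1 ≤ d) (C : Set (EuclideanSpace ℝ (Fin d)))
    (hCcl : IsClosed C) (hCconv : Convex ℝ C)
    (K : Set (EuclideanSpace ℝ (Fin d))) (hKborel : MeasurableSet K)
    (hKtd : IsTotallyDisconnected K)
    (hKhull : convexHull ℝ K = C)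
    (hKproj : ∀ (W : Submodule ℝ (EuclideanSpace ℝ (Fin d))), finrank ℝ W = 1 →
      orthProj W '' K = orthProj W '' C) :
    C.exposedPoints ℝ ⊆ K ∧ IsTotallyDisconnected (C.exposedPoints ℝ) := by
  have hKC : K ⊆ C := hKhull ▸ subset_convexHull ℝ K
  have hsub : C.exposedPoints ℝ ⊆ K := by
    rintro x hx
    rw [exposed_point_def] at hx
    obtain ⟨hxC, l, hl⟩ := hx
    set v : EuclideanSpace ℝ (Fin d) := (InnerProductSpace.toDual ℝ _).symm l with hv
    have hvl : ∀ y, inner ℝ v y = l y := fun y => by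
      simp [hv, InnerProductSpace.toDual_symm_apply]
    by_cases hv0 : v = 0
    · -- then l = 0 and C is a singleton {x}
      have hl0 : ∀ y, l y = (0 : ℝ) := fun y => by
        rw [← hvl y, hv0, inner_zero_left]
      have hCx : C ⊆ {x} := fun y hy => (hl y hy).2 (by rw [hl0, hl0])
      have hKne : K.Nonempty := by
        by_contra h
        rw [not_nonempty_iff_eq_empty] at h
        rw [h, convexHull_empty] at hKhull
        exact absurd hxC (hKhull ▸ notMem_empty x)
      obtain ⟨k, hk⟩ := hKne
      have : k = x := hCx (hKC hk)
      exact this ▸ hk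
    · have hW : finrank ℝ (ℝ ∙ v) = 1 := finrank_span_singleton hv0
      have := hKproj (ℝ ∙ v) hW
      have hxim : orthProj (ℝ ∙ v) x ∈ orthProj (ℝ ∙ v) '' K := by
        rw [this]; exact mem_image_of_mem _ hxC
      obtain ⟨k, hkK, hk⟩ := hxim
      have hproj : ∀ y : EuclideanSpace ℝ (Fin d),
          orthProj (ℝ ∙ v) y = ((inner ℝ v y / (‖v‖ : ℝ) ^ 2) : ℝ) • v := fun y => by
        simp [orthProj, Submodule.starProjection_singleton]
      have hinner : (inner ℝ v k : ℝ) = inner ℝ v x := by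
        have h1 := hk
        rw [hproj k, hproj x] at h1
        have h2 : (inner ℝ v k / (‖v‖ : ℝ) ^ 2 : ℝ) = inner ℝ v x / (‖v‖ : ℝ) ^ 2 :=
          smul_left_injective ℝ hv0 h1
        have hn : (‖v‖ : ℝ) ^ 2 ≠ 0 := pow_ne_zero _ (norm_ne_zero_iff.mpr hv0)
        field_simp at h2
        exact h2
      have hlk : l k = l x := by rw [← hvl, ← hvl, hinner]
      have : k = x := (hl k (hKC hkK)).2 hlk.ge
      exact this ▸ hkK
  exact ⟨hsub, fun t ht hpc => hKtd t (ht.trans hsub) hpc⟩
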